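/- Let ν be a valuation on K[x], let f ∈ K[x] be a monic non-constant polynomial with ν(f) < ∞, let Z(f) be the multiset of roots of f (with multiplicity) in a fixed algebraic closure K̄ of K, and let ν̄ be any valuation on K̄[x] with values in Λ ∪ {∞} whose restriction to K[x] is ν. Then ε(f) = max{ν̄(x − θ) : θ ∈ Z(f)}, and moreover the multiplicity of the value ε(f) in the multiset {ν̄(x − θ) : θ ∈ Z(f)} is equal to max(I(f)). -/

import Mathlib

open Polynomial

namespace KeyPolPaper

variable {K : Type*} [Field K] {Λ : Type*} [AddCommGroup Λ] [LinearOrder Λ] [IsOrderedAddMonoid Λ]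

/-- A valuation on `F[X]` with values in `Λ ∪ {∞}`: multiplicative, satisfies the
ultrametric inequality, and is finite on nonzero constants. -/
def IsValuation {F : Type*} [Field F] (w : F[X] → WithTop Λ) : Prop :=
  w 0 = ⊤ ∧ (∀ f g : F[X], w (f * g) = w f + w g) ∧
    (∀ f g : F[X], min (w f) (w g) ≤ w (f + g)) ∧
    ∀ a : F, a ≠ 0 → w (C a) ≠ ⊤

/-- `μ ≤ ν` for valuations on `K[X]`. -/
def ValLE (μ ν : K[X] → WithTop Λ) : Prop := ∀ f : K[X], μ f ≤ ν f

/-- `μ < ν` for valuations on `K[X]`. -/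
def ValLT (μ ν : K[X] → WithTop Λ) : Prop := ValLE μ ν ∧ μ ≠ ν

/-- ν-equivalence: `f ∼_ν g` iff `ν (f - g) > ν f`. -/
def VEquiv (ν : K[X] → WithTop Λ) (f g : K[X]) : Prop := ν f < ν (f - g)

/-- ν-divisibility: `h ∣_ν g` iff `g ∼_ν q * h` for some `q`. -/
def VDvd (ν : K[X] → WithTop Λ) (h g : K[X]) : Prop := ∃ q : K[X], VEquiv ν g (q * h)

/-- MacLane–Vaquié key polynomial: monic, ν-minimal and ν-irreducible. -/
def IsMLVKey (ν : K[X] → WithTop Λ) (φ : K[X]) : Prop :=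
  φ.Monic ∧ (∀ f : K[X], f ≠ 0 → f.natDegree < φ.natDegree → ¬ VDvd ν φ f) ∧
    ¬ VDvd ν φ 1 ∧ ∀ f g : K[X], VDvd ν φ (f * g) → VDvd ν φ f ∨ VDvd ν φ g

/-- `e` is the value `ε(f) = max_{b ≥ 1} (ν f - ν (∂_b f)) / b`; phrased multiplicatively,
`e` satisfies `ν f ≤ ν (∂_b f) + b • e` for all `b ≥ 1`, with equality for some `b ≥ 1`.
If `ν f = ∞` then `ε(f) = ∞`. -/
def IsEps (ν : K[X] → WithTop Λ) (f : K[X]) (e : WithTop Λ) : Prop :=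
  (ν f = ⊤ ∧ e = ⊤) ∨
    (ν f ≠ ⊤ ∧ (∀ b : ℕ, 1 ≤ b → ν f ≤ ν (hasseDeriv b f) + b • e) ∧
      ∃ b : ℕ, 1 ≤ b ∧ ν f = ν (hasseDeriv b f) + b • e)

/-- The invariant `ε(f)`; well defined (for non-constant `f`) since `Λ` is divisible and
the defining property determines `e` uniquely. -/
noncomputable def eps (ν : K[X] → WithTop Λ) (f : K[X]) : WithTop Λ :=
  letI := Classical.propDecidable (∃ e : WithTop Λ, IsEps ν f e)
  if h : ∃ e : WithTop Λ, IsEps ν f e then h.choose else ⊤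

/-- The set `I(f)` of indices `b ≥ 1` with `ν (∂_b f) = ν f - b • ε(f)`. -/
def epsAttain (ν : K[X] → WithTop Λ) (f : K[X]) : Set ℕ :=
  {b : ℕ | 1 ≤ b ∧ ν f = ν (hasseDeriv b f) + b • eps ν f}

/-- Abstract key polynomial for `ν`. -/
def IsKeyPoly (ν : K[X] → WithTop Λ) (Q : K[X]) : Prop :=
  Q.Monic ∧ 0 < Q.natDegree ∧
    ∀ f : K[X], 0 < f.natDegree → f.natDegree < Q.natDegree → eps ν f < eps ν Q

/-- The `s`-th coefficient of the canonical `Q`-expansion `f = Σ_s a_s Q^s`,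
`deg a_s < deg Q`. -/
noncomputable def qCoeff (Q f : K[X]) (s : ℕ) : K[X] := ((· /ₘ Q)^[s] f) %ₘ Q

/-- The truncation `ν_Q (f) = min_s ν (a_s Q^s)`. -/
noncomputable def trunc (ν : K[X] → WithTop Λ) (Q f : K[X]) : WithTop Λ :=
  (Finset.range (f.natDegree + 1)).inf fun s => ν (qCoeff Q f s * Q ^ s)

/-- `S_{ν,Q}(f)`: the set of indices attaining the minimum in `ν_Q(f)`. -/
def attain (ν : K[X] → WithTop Λ) (Q f : K[X]) : Set ℕ :=
  {s : ℕ | ν (qCoeff Q f s * Q ^ s) = trunc ν Q f}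

/-- The augmented valuation `[μ; φ, γ] (f) = min_s (μ (a_s) + s • γ)` on φ-expansions. -/
noncomputable def augVal (μ : K[X] → WithTop Λ) (φ : K[X]) (γ : WithTop Λ) (f : K[X]) :
    WithTop Λ :=
  (Finset.range (f.natDegree + 1)).inf fun s => μ (qCoeff φ f s) + s • γ

/-- `Φ_{μ,ν}`: monic polynomials of minimal degree with `μ φ < ν φ`. -/
def PhiSet (μ ν : K[X] → WithTop Λ) : Set K[X] :=
  {φ : K[X] | φ.Monic ∧ μ φ < ν φ ∧
    ∀ ψ : K[X], ψ.Monic → μ ψ < ν ψ → φ.natDegree ≤ ψ.natDegree}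

/-- `mult f`: the least `b ≥ 1` with `∂_b f ≠ 0`. -/
noncomputable def multOf (f : K[X]) : ℕ := sInf {b : ℕ | 1 ≤ b ∧ hasseDeriv b f ≠ 0}

/-- Abstract limit key polynomial for `ν` (conditions (K1)-(K4)). -/
def IsLimitKeyPoly (ν : K[X] → WithTop Λ) (Q : K[X]) : Prop :=
  Q.Monic ∧
    ∃ Qm : K[X], IsKeyPoly ν Qm ∧ ValLT (trunc ν Qm) ν ∧
      (∃ χ ∈ PhiSet (trunc ν Qm) ν, Qm.natDegree = χ.natDegree) ∧
      (∀ χ ∈ PhiSet (trunc ν Qm) ν, ∃ χ' ∈ PhiSet (trunc ν Qm) ν, ν χ < ν χ') ∧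
      (∀ χ ∈ PhiSet (trunc ν Qm) ν, trunc ν χ Q < ν Q) ∧
      ∀ Q' : K[X], Q'.Monic →
        (∀ χ ∈ PhiSet (trunc ν Qm) ν, trunc ν χ Q' < ν Q') → Q.natDegree ≤ Q'.natDegree

/-- A continuous MacLane chain of stable degree `m`: valuations `ρ_0 < ρ_1 < ⋯`,
monic key polynomials `χ_i` (for `i ≥ 1`) of degree `m`, with
`ρ_i = [ρ_{i-1}; χ_i, β_i]`, `β_i = ρ_i (χ_i) > ρ_{i-1} (χ_i)` and
`χ_{i+1} ∤_{ρ_i} χ_i`. -/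
structure MacLaneChain (K : Type*) [Field K] (Λ : Type*) [AddCommGroup Λ] [LinearOrder Λ] [IsOrderedAddMonoid Λ] where
  m : ℕ
  hm : 0 < m
  ρ : ℕ → K[X] → WithTop Λ
  χ : ℕ → K[X]
  β : ℕ → Λ
  isVal : ∀ i : ℕ, IsValuation (ρ i)
  mono : ∀ i : ℕ, ValLT (ρ i) (ρ (i + 1))
  monicChi : ∀ i : ℕ, (χ (i + 1)).Monic
  degChi : ∀ i : ℕ, (χ (i + 1)).natDegree = m
  keyChi : ∀ i : ℕ, IsMLVKey (ρ i) (χ (i + 1))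
  beta_def : ∀ i : ℕ, ρ (i + 1) (χ (i + 1)) = (β (i + 1) : WithTop Λ)
  beta_lt : ∀ i : ℕ, ρ i (χ (i + 1)) < (β (i + 1) : WithTop Λ)
  aug : ∀ i : ℕ, ρ (i + 1) = augVal (ρ i) (χ (i + 1)) (β (i + 1) : WithTop Λ)
  not_dvd : ∀ i : ℕ, ¬ VDvd (ρ (i + 1)) (χ (i + 2)) (χ (i + 1))

/-- A polynomial is stable w.r.t. the chain if its values `ρ_i f` are eventually constant. -/
def MacLaneChain.Stable (ch : MacLaneChain K Λ) (f : K[X]) : Prop :=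
  ∃ i0 : ℕ, ∀ i : ℕ, i0 ≤ i → ch.ρ i f = ch.ρ i0 f

/-- The chain is essential: non-stable polynomials exist and all have degree `> m`. -/
def MacLaneChain.Essential (ch : MacLaneChain K Λ) : Prop :=
  (∃ f : K[X], ¬ ch.Stable f) ∧ ∀ f : K[X], ¬ ch.Stable f → ch.m < f.natDegree

/-- MLV limit key polynomials of the chain: monic non-stable polynomials of minimal
degree `m_∞`. -/
def MacLaneChain.IsLimKP (ch : MacLaneChain K Λ) (φ : K[X]) : Prop :=
  φ.Monic ∧ ¬ ch.Stable φ ∧ ∀ f : K[X], ¬ ch.Stable f → φ.natDegree ≤ f.natDegree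

/-- Convex subgroup of a linearly ordered abelian group. -/
def IsConvexSubgroup (H : AddSubgroup Λ) : Prop :=
  ∀ x y : Λ, 0 < x → x < y → y ∈ H → x ∈ H

/-- The value group of a valuation: the subgroup of `Λ` generated by the finite values. -/
def valueGroup {F : Type*} [Field F] (ρ : F[X] → WithTop Λ) : AddSubgroup Λ :=
  AddSubgroup.closure {γ : Λ | ∃ f : F[X], ρ f = (γ : WithTop Λ)}


variable [Module ℚ Λ]

/-- The multiset of values `ν̄ (x - θ)` over the roots `θ` of `f` in the algebraic
closure of `K` (with multiplicity). -/
noncomputable def rootVals (w : Polynomial (AlgebraicClosure K) → WithTop Λ) (f : K[X]) :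
    Multiset (WithTop Λ) :=
  (f.map (algebraMap K (AlgebraicClosure K))).roots.map fun θ => w (X - C θ)


section AuxLemmas
variable {F : Type*} [Field F] {w : F[X] → WithTop Λ}

lemma IsValuation.map_one (hw : IsValuation w) : w 1 = 0 := by
  have h1 : w 1 = w 1 + w 1 := by simpa using (hw.2.1 1 1)
  have hne : w 1 ≠ ⊤ := by simpa using hw.2.2.2 1 one_ne_zero
  lift w 1 to Λ using hne with a ha
  rw [← WithTop.coe_add, WithTop.coe_inj] at h1
  simp [left_eq_add.mp h1]

lemma IsValuation.map_neg (hw : IsValuation w) (p : F[X]) : w (-p) = w p := by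
  have hm : w (C (-1 : F)) = 0 := by
    have h1 : w (C (-1 : F) * C (-1 : F)) = w (C (-1:F)) + w (C (-1:F)) := hw.2.1 _ _
    have : (C (-1 : F) * C (-1 : F)) = 1 := by ring_nf; simp
    rw [this, hw.map_one] at h1
    have hne : w (C (-1:F)) ≠ ⊤ := hw.2.2.2 _ (by norm_num)
    lift w (C (-1:F)) to Λ using hne with a ha
    rw [← WithTop.coe_add, ← WithTop.coe_zero, WithTop.coe_inj] at h1
    have : a = 0 := by
      have h2 := h1.symm
      rcases lt_trichotomy a 0 with h|h|h
      · exact absurd h2 (ne_of_lt (add_neg h h))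
      · exact h
      · exact absurd h2 (ne_of_gt (add_pos h h))
    simp [this]
  have hneg : C (-1 : F) * p = -p := by simp
  rw [← hneg, hw.2.1, hm, zero_add]

lemma IsValuation.add_eq (hw : IsValuation w) {p q : F[X]} (h : w p < w q) :
    w (p + q) = w p := by
  refine le_antisymm ?_ ?_
  · have h2 : min (w (p + q)) (w (-q)) ≤ w p := by
      have := hw.2.2.1 (p + q) (-q)
      simpa using this
    rw [hw.map_neg] at h2
    rcases min_le_iff.mp h2 with h3 | h3
    · exact h3
    · exact absurd h3 (not_le.mpr h)
  · have := hw.2.2.1 p q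
    rwa [min_eq_left h.le] at this

lemma nsmul_coe (n : ℕ) (γ : Λ) : (n • (γ : WithTop Λ)) = ((n • γ : Λ) : WithTop Λ) := by
  induction n with
  | zero => simp
  | succ k ih => rw [succ_nsmul, succ_nsmul, ih, WithTop.coe_add]

lemma nsmul_coe_ne_top (n : ℕ) (γ : Λ) : (n • (γ : WithTop Λ)) ≠ ⊤ := by
  rw [nsmul_coe]; exact WithTop.coe_ne_top

lemma hasseDeriv_linear_mul (θ : F) (p : F[X]) (k : ℕ) :
    hasseDeriv (k + 1) ((X - C θ) * p) =
      (X - C θ) * hasseDeriv (k + 1) p + hasseDeriv k p := by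
  rw [hasseDeriv_mul, Finset.Nat.sum_antidiagonal_eq_sum_range_succ_mk]
  have hsub : Finset.range 2 ⊆ Finset.range (k + 1 + 1) := by
    apply Finset.range_subset_range.mpr; omega
  rw [← Finset.sum_subset hsub]
  · rw [Finset.sum_range_succ, Finset.sum_range_one]
    simp [hasseDeriv_zero', hasseDeriv_one', derivative_X_sub_C]
  · intro i _ hi
    have h2 : 2 ≤ i := by simp at hi; omega
    rw [hasseDeriv_eq_zero_of_lt_natDegree (X - C θ) i (by simp; omega), zero_mul]


lemma key_induction (hw : IsValuation w) (Γ : Λ) :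
    ∀ (M : Multiset F),
    (∀ θ ∈ M, w (X - C θ) ≠ ⊤) →
    (∀ θ ∈ M, w (X - C θ) ≤ (Γ : WithTop Λ)) →
    w ((M.map fun θ => X - C θ).prod) ≠ ⊤ ∧
    (∀ b : ℕ, w ((M.map fun θ => X - C θ).prod) ≤
        w (hasseDeriv b ((M.map fun θ => X - C θ).prod)) + b • (Γ : WithTop Λ)) ∧
    (∀ b : ℕ, ((M.map fun θ => w (X - C θ)).count (Γ : WithTop Λ)) < b →
        w ((M.map fun θ => X - C θ).prod) <
          w (hasseDeriv b ((M.map fun θ => X - C θ).prod)) + b • (Γ : WithTop Λ)) ∧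
    w (hasseDeriv ((M.map fun θ => w (X - C θ)).count (Γ : WithTop Λ))
        ((M.map fun θ => X - C θ).prod)) +
      ((M.map fun θ => w (X - C θ)).count (Γ : WithTop Λ)) • (Γ : WithTop Λ) =
      w ((M.map fun θ => X - C θ).prod) := by
  intro M
  induction M using Multiset.induction_on with
  | empty =>
    intro _ _
    simp only [Multiset.map_zero, Multiset.prod_zero, Multiset.count_zero]
    refine ⟨by simp [hw.map_one], ?_, ?_, by simp [hasseDeriv_zero', hw.map_one]⟩
    · intro b
      rcases Nat.eq_zero_or_pos b with hb | hb
      · subst hb; simp [hasseDeriv_zero', hw.map_one]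
      · rw [hasseDeriv_eq_zero_of_lt_natDegree _ b (by simpa using hb), hw.1]
        simp [hw.map_one]
    · intro b hb
      rw [hasseDeriv_eq_zero_of_lt_natDegree _ b (by simpa using hb), hw.1]
      simp only [top_add, hw.map_one]
      exact WithTop.coe_lt_top 0
  | cons θ M ih =>
    intro hfin hle
    have hfin' : ∀ x ∈ M, w (X - C x) ≠ ⊤ := fun x hx => hfin x (Multiset.mem_cons_of_mem hx)
    have hle' : ∀ x ∈ M, w (X - C x) ≤ (Γ : WithTop Λ) :=
      fun x hx => hle x (Multiset.mem_cons_of_mem hx)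
    obtain ⟨ih0, ih1, ih2, ih3⟩ := ih hfin' hle'
    have hγfin : w (X - C θ) ≠ ⊤ := hfin θ (Multiset.mem_cons_self θ M)
    have hγle : w (X - C θ) ≤ (Γ : WithTop Λ) := hle θ (Multiset.mem_cons_self θ M)
    set γ := w (X - C θ) with hγ
    set P : F[X] := (M.map fun x => X - C x).prod with hP
    set d' := (M.map fun x => w (X - C x)).count ((Γ : WithTop Λ)) with hd'
    have hmapcons : ((θ ::ₘ M).map fun x => X - C x).prod = (X - C θ) * P := by
      rw [Multiset.map_cons, Multiset.prod_cons]
    have hwP : w ((X - C θ) * P) = γ + w P := hw.2.1 _ _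
    have hwPfin : γ + w P ≠ ⊤ := by
      rw [WithTop.add_ne_top]; exact ⟨hγfin, ih0⟩
    have hcount : ((θ ::ₘ M).map fun x => w (X - C x)).count ((Γ : WithTop Λ)) =
        d' + (if (Γ : WithTop Λ) = γ then 1 else 0) := by
      rw [Multiset.map_cons, Multiset.count_cons]
    -- Part 1
    have part1 : ∀ b : ℕ, w ((X - C θ) * P) ≤
        w (hasseDeriv b ((X - C θ) * P)) + b • (Γ : WithTop Λ) := by
      intro b
      cases b with
      | zero => simp [hasseDeriv_zero']
      | succ k =>
        rw [hasseDeriv_linear_mul]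
        set t1 := (X - C θ) * hasseDeriv (k + 1) P with ht1
        set t2 := hasseDeriv k P with ht2
        have hmin := hw.2.2.1 t1 t2
        have h1 : w ((X - C θ) * P) ≤ w t1 + (k + 1) • (Γ : WithTop Λ) := by
          rw [hwP, ht1, hw.2.1]
          calc γ + w P ≤ γ + (w (hasseDeriv (k + 1) P) + (k + 1) • (Γ : WithTop Λ)) :=
                add_le_add_right (ih1 (k + 1)) γ
            _ = γ + w (hasseDeriv (k + 1) P) + (k + 1) • (Γ : WithTop Λ) := (add_assoc _ _ _).symm
        have h2 : w ((X - C θ) * P) ≤ w t2 + (k + 1) • (Γ : WithTop Λ) := by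
          rw [hwP]
          calc γ + w P ≤ (Γ : WithTop Λ) + (w t2 + k • (Γ : WithTop Λ)) :=
                add_le_add hγle (ih1 k)
            _ = w t2 + (k + 1) • (Γ : WithTop Λ) := by rw [succ_nsmul]; abel
        calc w ((X - C θ) * P) ≤ min (w t1 + (k + 1) • (Γ : WithTop Λ))
              (w t2 + (k + 1) • (Γ : WithTop Λ)) := le_min h1 h2
          _ = min (w t1) (w t2) + (k + 1) • (Γ : WithTop Λ) := (min_add_add_right _ _ _)
          _ ≤ w (t1 + t2) + (k + 1) • (Γ : WithTop Λ) := add_le_add_left hmin _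
    -- Part 2
    have part2 : ∀ b : ℕ,
        ((θ ::ₘ M).map fun x => w (X - C x)).count ((Γ : WithTop Λ)) < b →
        w ((X - C θ) * P) < w (hasseDeriv b ((X - C θ) * P)) + b • (Γ : WithTop Λ) := by
      intro b hb
      rw [hcount] at hb
      cases b with
      | zero => exact absurd hb (Nat.not_lt_zero _)
      | succ k =>
        rw [hasseDeriv_linear_mul]
        set t1 := (X - C θ) * hasseDeriv (k + 1) P with ht1
        set t2 := hasseDeriv k P with ht2
        have hmin := hw.2.2.1 t1 t2
        have hite : (if (Γ : WithTop Λ) = γ then 1 else 0) ≤ 1 := by split <;> omega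
        have hd'k : d' < k + 1 := by omega
        have h1 : w ((X - C θ) * P) < w t1 + (k + 1) • (Γ : WithTop Λ) := by
          rw [hwP, ht1, hw.2.1, add_assoc]
          exact WithTop.add_lt_add_left hγfin (ih2 (k + 1) hd'k)
        have h2 : w ((X - C θ) * P) < w t2 + (k + 1) • (Γ : WithTop Λ) := by
          rw [hwP]
          have hrw : w t2 + (k + 1) • (Γ : WithTop Λ) =
              (Γ : WithTop Λ) + (w t2 + k • (Γ : WithTop Λ)) := by rw [succ_nsmul]; abel
          rw [hrw]
          by_cases hcase : (Γ : WithTop Λ) = γ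
          · rw [if_pos hcase] at hb
            have hdk : d' < k := by omega
            rw [← hcase]
            exact WithTop.add_lt_add_left WithTop.coe_ne_top (ih2 k hdk)
          · have hγlt : γ < (Γ : WithTop Λ) := lt_of_le_of_ne hγle (fun h => hcase h.symm)
            calc γ + w P < (Γ : WithTop Λ) + w P := by
                  exact WithTop.add_lt_add_right ih0 hγlt
              _ ≤ (Γ : WithTop Λ) + (w t2 + k • (Γ : WithTop Λ)) :=
                  add_le_add_right (ih1 k) _
        calc w ((X - C θ) * P) < min (w t1 + (k + 1) • (Γ : WithTop Λ))
              (w t2 + (k + 1) • (Γ : WithTop Λ)) := lt_min h1 h2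
          _ = min (w t1) (w t2) + (k + 1) • (Γ : WithTop Λ) := (min_add_add_right _ _ _)
          _ ≤ w (t1 + t2) + (k + 1) • (Γ : WithTop Λ) := add_le_add_left hmin _
    -- Part 3
    have part3 : w (hasseDeriv (((θ ::ₘ M).map fun x => w (X - C x)).count ((Γ : WithTop Λ)))
          ((X - C θ) * P)) +
        (((θ ::ₘ M).map fun x => w (X - C x)).count ((Γ : WithTop Λ))) • (Γ : WithTop Λ) =
        w ((X - C θ) * P) := by
      rw [hcount]
      by_cases hcase : (Γ : WithTop Λ) = γ
      · rw [if_pos hcase, hasseDeriv_linear_mul]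
        set t1 := (X - C θ) * hasseDeriv (d' + 1) P with ht1
        set t2 := hasseDeriv d' P with ht2
        have ht2fin : w t2 ≠ ⊤ := by intro h; apply ih0; rw [← ih3, h, top_add]
        have hlt : w t2 < w t1 := by
          refine (WithTop.add_lt_add_iff_right (nsmul_coe_ne_top d' Γ)).mp ?_
          rw [ih3, ht1, hw.2.1, ← hγ, ← hcase]
          have h5 := ih2 (d' + 1) (Nat.lt_succ_self d')
          rw [succ_nsmul] at h5
          calc w P < w (hasseDeriv (d' + 1) P) + (d' • (Γ : WithTop Λ) + (Γ : WithTop Λ)) := h5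
            _ = (Γ : WithTop Λ) + w (hasseDeriv (d' + 1) P) + d' • (Γ : WithTop Λ) := by abel
        have hadd : w (t1 + t2) = w t2 := by rw [add_comm]; exact hw.add_eq hlt
        rw [hadd, hwP, ← hcase, succ_nsmul]
        calc w t2 + (d' • (Γ : WithTop Λ) + (Γ : WithTop Λ))
            = w t2 + d' • (Γ : WithTop Λ) + (Γ : WithTop Λ) := by abel
          _ = w P + (Γ : WithTop Λ) := by rw [ih3]
          _ = (Γ : WithTop Λ) + w P := add_comm _ _
      · rw [if_neg hcase, add_zero]
        rcases Nat.eq_zero_or_pos d' with h0 | hpos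
        · rw [h0]; simp [hasseDeriv_zero', hwP]
        · obtain ⟨k, hdk⟩ : ∃ k, d' = k + 1 := ⟨d' - 1, by omega⟩
          rw [hdk] at ih3 ⊢
          rw [hasseDeriv_linear_mul]
          set t1 := (X - C θ) * hasseDeriv (k + 1) P with ht1
          set t2 := hasseDeriv k P with ht2
          have hγlt : γ < (Γ : WithTop Λ) := lt_of_le_of_ne hγle fun h => hcase h.symm
          have hlt : w t1 < w t2 := by
            refine (WithTop.add_lt_add_iff_right (nsmul_coe_ne_top (k + 1) Γ)).mp ?_
            rw [ht1, hw.2.1, ← hγ, add_assoc, ih3]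
            calc γ + w P < (Γ : WithTop Λ) + w P := WithTop.add_lt_add_right ih0 hγlt
              _ ≤ (Γ : WithTop Λ) + (w t2 + k • (Γ : WithTop Λ)) := add_le_add_right (ih1 k) _
              _ = w t2 + (k + 1) • (Γ : WithTop Λ) := by rw [succ_nsmul]; abel
          have hadd : w (t1 + t2) = w t1 := hw.add_eq hlt
          rw [hadd, hwP, ht1, hw.2.1, ← hγ, add_assoc, ih3]
    exact ⟨by rw [hmapcons, hwP]; exact hwPfin,
      by rw [hmapcons]; exact part1, by rw [hmapcons]; exact part2, by rw [hmapcons]; exact part3⟩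

end AuxLemmas

section AuxLemmas2
lemma exists_max {α : Type*} [LinearOrder α] (s : Multiset α) (hs : s ≠ 0) :
    ∃ a ∈ s, ∀ b ∈ s, b ≤ a := by
  induction s using Multiset.induction_on with
  | empty => exact absurd rfl hs
  | cons a s ih =>
    rcases eq_or_ne s 0 with rfl | h
    · exact ⟨a, Multiset.mem_cons_self _ _, fun b hb => le_of_eq (by simpa using hb)⟩
    · obtain ⟨m, hm, hmax⟩ := ih h
      rcases le_total a m with h1 | h1
      · refine ⟨m, Multiset.mem_cons_of_mem hm, fun b hb => ?_⟩
        rcases Multiset.mem_cons.mp hb with rfl | hb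
        · exact h1
        · exact hmax b hb
      · refine ⟨a, Multiset.mem_cons_self _ _, fun b hb => ?_⟩
        rcases Multiset.mem_cons.mp hb with rfl | hb
        · exact le_rfl
        · exact (hmax b hb).trans h1

lemma nsmul_top {b : ℕ} (hb : b ≠ 0) : b • (⊤ : WithTop Λ) = ⊤ := by
  cases b with
  | zero => omega
  | succ k => rw [succ_nsmul, add_top]

lemma nsmul_lt_nsmul' {b : ℕ} (hb : b ≠ 0) {x y : WithTop Λ} (h : x < y) : b • x < b • y := by
  induction x using WithTop.recTopCoe with
  | top => exact absurd h (by simp)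
  | coe x =>
    induction y using WithTop.recTopCoe with
    | top => rw [nsmul_top hb, nsmul_coe]; exact WithTop.coe_lt_top _
    | coe y =>
      rw [nsmul_coe, nsmul_coe, WithTop.coe_lt_coe]
      have hxy : (0 : Λ) < y - x := sub_pos.mpr (WithTop.coe_lt_coe.mp h)
      have h1 : (0 : Λ) < b • (y - x) := nsmul_pos hxy hb
      have h2 : b • y = b • (y - x) + b • x := by rw [← nsmul_add, sub_add_cancel]
      rw [h2]
      exact lt_add_of_pos_left _ h1

lemma nsmul_le_cancel {b : ℕ} (hb : 1 ≤ b) {e e' : WithTop Λ} (h : b • e ≤ b • e') : e ≤ e' := by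
  by_contra hlt
  push_neg at hlt
  exact absurd h (not_le.mpr (nsmul_lt_nsmul' (by omega) hlt))

lemma isEps_unique {ν : K[X] → WithTop Λ} {f : K[X]} {e e' : WithTop Λ}
    (h : IsEps ν f e) (h' : IsEps ν f e') : e = e' := by
  rcases h with ⟨hft, he⟩ | ⟨hft, hub, b, hb1, hbe⟩
  · rcases h' with ⟨_, he'⟩ | ⟨hft', _⟩
    · rw [he, he']
    · exact absurd hft hft'
  · rcases h' with ⟨hft', _⟩ | ⟨_, hub', b', hb1', hbe'⟩
    · exact absurd hft' hft
    · have cancel : ∀ (c : ℕ), 1 ≤ c → ∀ (u v : WithTop Λ), ν f = ν (hasseDeriv c f) + c • u →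
          ν f ≤ ν (hasseDeriv c f) + c • v → u ≤ v := by
        intro c hc u v hequ hlev
        have hfin : ν (hasseDeriv c f) ≠ ⊤ := by
          intro htop; rw [htop, top_add] at hequ; exact hft hequ
        rw [hequ] at hlev
        exact nsmul_le_cancel hc ((WithTop.add_le_add_iff_left hfin).mp hlev)
      exact le_antisymm (cancel b hb1 e e' hbe (hub' b hb1))
        (cancel b' hb1' e' e hbe' (hub b' hb1'))

lemma eps_eq {ν : K[X] → WithTop Λ} {f : K[X]} {e : WithTop Λ} (h : IsEps ν f e) :
    eps ν f = e := by
  have hex : ∃ e : WithTop Λ, IsEps ν f e := ⟨e, h⟩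
  have h1 : eps ν f = hex.choose := by
    unfold eps
    exact dif_pos hex
  rw [h1]
  exact isEps_unique hex.choose_spec h

lemma hasseDeriv_map' {F F' : Type*} [Field F] [Field F'] (φ : F →+* F') (k : ℕ) (p : F[X]) :
    (hasseDeriv k p).map φ = hasseDeriv k (p.map φ) := by
  ext n
  simp [coeff_map, hasseDeriv_coeff, map_mul, map_natCast]

end AuxLemmas2

open Classical in
/-- `ε(f)` is the maximum of `ν̄(x - θ)` over the roots `θ` of `f` in `K̄`,
and the multiplicity of `ε(f)` in this multiset equals `max I(f)`. -/
theorem stmt0 (ν : K[X] → WithTop Λ) (hν : IsValuation ν)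
    (f : K[X]) (hf_monic : f.Monic) (hf_deg : 0 < f.natDegree) (hf_fin : ν f ≠ ⊤)
    (w : Polynomial (AlgebraicClosure K) → WithTop Λ) (hw : IsValuation w)
    (hres : ∀ g : K[X], w (g.map (algebraMap K (AlgebraicClosure K))) = ν g) :
    (eps ν f ∈ rootVals w f ∧ ∀ v ∈ rootVals w f, v ≤ eps ν f) ∧
      IsGreatest (epsAttain ν f) (Multiset.count (eps ν f) (rootVals w f)) := by
  classical
  set fb : Polynomial (AlgebraicClosure K) := f.map (algebraMap K (AlgebraicClosure K))
  have hfbm : fb.Monic := hf_monic.map _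
  have hsplits : Splits fb :=
    IsAlgClosed.splits fb
  set M : Multiset (AlgebraicClosure K) := fb.roots
  have hprod : fb = (M.map fun a => X - C a).prod :=
    hsplits.eq_prod_roots_of_monic hfbm
  have hwfb : w fb = ν f := hres f
  have hfin : ∀ θ ∈ M, w (X - C θ) ≠ ⊤ := by
    intro θ hθ h
    apply hf_fin
    rw [← hwfb, hprod, ← Multiset.cons_erase hθ, Multiset.map_cons, Multiset.prod_cons,
      hw.2.1, h, top_add]
  have hdeg : fb.natDegree = f.natDegree := hf_monic.natDegree_map _
  have hMne : M ≠ 0 := by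
    intro h0
    rw [h0] at hprod
    simp only [Multiset.map_zero, Multiset.prod_zero] at hprod
    rw [hprod] at hdeg
    simp only [natDegree_one] at hdeg
    omega
  obtain ⟨Γ', hΓ'mem, hΓ'max⟩ := exists_max (M.map fun θ => w (X - C θ)) (by simpa using hMne)
  obtain ⟨θ0, hθ0, hθ0e⟩ := Multiset.mem_map.mp hΓ'mem
  have hΓ'fin : Γ' ≠ ⊤ := hθ0e ▸ hfin θ0 hθ0
  lift Γ' to Λ using hΓ'fin with Γ hΓ
  obtain ⟨k0, k1, k2, k3⟩ := key_induction hw Γ M hfin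
    (fun θ hθ => hΓ'max _ (Multiset.mem_map_of_mem _ hθ))
  have hPv : w ((M.map fun a => X - C a).prod) = ν f := by rw [← hprod, hwfb]
  have hD : ∀ b : ℕ, w (hasseDeriv b ((M.map fun a => X - C a).prod)) = ν (hasseDeriv b f) := by
    intro b
    rw [← hprod]
    show w (hasseDeriv b (f.map (algebraMap K (AlgebraicClosure K)))) = _
    rw [← hasseDeriv_map']
    exact hres _
  set d : ℕ := (M.map fun θ => w (X - C θ)).count ((Γ : WithTop Λ)) with hd
  have hd1 : 1 ≤ d := Multiset.count_pos.mpr hΓ'mem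
  have hk3' : ν f = ν (hasseDeriv d f) + d • (Γ : WithTop Λ) := by
    have h3 := k3
    rw [hPv, hD] at h3
    exact h3.symm
  have hIsEps : IsEps ν f ((Γ : WithTop Λ)) := by
    right
    refine ⟨hf_fin, fun b _ => ?_, d, hd1, hk3'⟩
    have h1 := k1 b
    rwa [hPv, hD b] at h1
  have heps : eps ν f = (Γ : WithTop Λ) := eps_eq hIsEps
  have hrv : rootVals w f = M.map fun θ => w (X - C θ) := rfl
  have hcnt : Multiset.count (eps ν f) (rootVals w f) = d := by rw [heps, hrv]
  refine ⟨⟨?_, ?_⟩, ?_, ?_⟩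
  · rw [heps, hrv]; exact hΓ'mem
  · intro v hv
    rw [heps]
    rw [hrv] at hv
    exact hΓ'max v hv
  · rw [hcnt]
    exact ⟨hd1, by rw [heps]; exact hk3'⟩
  · intro b hb
    rw [hcnt]
    by_contra hlt
    push_neg at hlt
    obtain ⟨hb1, hbeq⟩ := hb
    have h2 := k2 b hlt
    rw [hPv, hD] at h2
    rw [heps] at hbeq
    exact absurd hbeq (ne_of_lt h2)


end KeyPolPaper
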